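/- Let n ≥ 1, L > 0, x₁, …, xₙ ∈ (0,1), and let F₀, F₁ : (0,1) → [0,1) satisfy F₁(x) ≤ F₀(x) < 1 for all x. If the indifference system L·x_i/(1−x_i) = ∏_{k≠i} (1−F₀(x_k))/(1−F₁(x_k)) holds for every i ∈ {1,…,n}, then x_i ≤ 1/(1+L) for every i; moreover the inequality is strict for player i whenever F₁(x_k) < F₀(x_k) for some k ≠ i. (Social insurance: in a unanimity game every player's equilibrium threshold is at most the single-player threshold 1/(1+L), strictly so except for the last player or in a cascade.) -/

import Mathlib

open Finset

/-- Social insurance: in a unanimity game every player's equilibrium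
threshold is at most the single-player threshold `1/(1+L)`, strictly so whenever some
other player's threshold satisfies strict stochastic dominance. -/
theorem social_insurance_unanimity
    (n : ℕ) (hn : 1 ≤ n) (L : ℝ) (hL : 0 < L)
    (x : Fin n → ℝ) (hx : ∀ i, x i ∈ Set.Ioo (0 : ℝ) 1)
    (F0 F1 : ℝ → ℝ)
    (hF : ∀ t ∈ Set.Ioo (0 : ℝ) 1, 0 ≤ F1 t ∧ F1 t ≤ F0 t ∧ F0 t < 1)
    (hind : ∀ i, L * x i / (1 - x i) =
      ∏ k ∈ univ.erase i, (1 - F0 (x k)) / (1 - F1 (x k))) :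
    (∀ i, x i ≤ 1 / (1 + L)) ∧
      ∀ i, (∃ k, k ≠ i ∧ F1 (x k) < F0 (x k)) → x i < 1 / (1 + L) := by
  set f : Fin n → ℝ := fun k => (1 - F0 (x k)) / (1 - F1 (x k)) with hf
  have hF1lt : ∀ k, F1 (x k) < 1 := fun k =>
    lt_of_le_of_lt (hF _ (hx k)).2.1 (hF _ (hx k)).2.2
  have hfpos : ∀ k, 0 < f k := fun k =>
    div_pos (by linarith [(hF _ (hx k)).2.2]) (by linarith [hF1lt k])
  have hfle : ∀ k, f k ≤ 1 := fun k => by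
    rw [div_le_one (by linarith [hF1lt k])]
    linarith [(hF _ (hx k)).2.1]
  have key : ∀ i r, (∏ k ∈ univ.erase i, f k) ≤ r → x i * (L + r) ≤ r := by
    intro i r hle
    have hxi := hx i
    have h1 : L * x i / (1 - x i) ≤ r := (hind i).le.trans hle
    have h2 : L * x i ≤ r * (1 - x i) := by
      rw [div_le_iff₀ (by linarith [hxi.2])] at h1; linarith
    nlinarith [hxi.1, hxi.2]
  constructor
  · intro i
    have := key i 1 (Finset.prod_le_one (fun k _ => (hfpos k).le) (fun k _ => hfle k))
    rw [le_div_iff₀ (by linarith)]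
    linarith
  · intro i ⟨k, hki, hstrict⟩
    have hkmem : k ∈ univ.erase i := Finset.mem_erase.2 ⟨hki, Finset.mem_univ k⟩
    have hfk : f k < 1 := by
      rw [div_lt_one (by linarith [hF1lt k])]; linarith
    obtain ⟨r, hrlt, hprod⟩ : ∃ r, r < 1 ∧ (∏ j ∈ univ.erase i, f j) ≤ r := by
      refine ⟨f k, hfk, ?_⟩
      rw [← Finset.mul_prod_erase _ f hkmem]
      nth_rewrite 2 [← mul_one (f k)]
      exact mul_le_mul_of_nonneg_left
        (Finset.prod_le_one (fun j _ => (hfpos j).le) (fun j _ => hfle j)) (hfpos k).le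
    have hk := key i r hprod
    have hxi := hx i
    rw [lt_div_iff₀ (by linarith)]
    nlinarith [hxi.1, hxi.2]
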